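/- Let X ∈ ℝ^{n×n} and p ∈ ℝⁿ with (X, p) controllable. Let q ∈ ℝⁿ and suppose that X + pqᵀ and X do not share any eigenvalue, i.e. the characteristic polynomials of X and of X + pqᵀ are coprime in ℝ[x]. Then the pair (Xᵀ + qpᵀ, q) is controllable (equivalently, (X + pqᵀ, qᵀ) is observable). -/

import Mathlib

open Matrix

/-- A pair `(X, p)` is controllable if `p, Xp, …, X^{n−1}p` span the whole space. -/
def Controllable {n : ℕ} (X : Matrix (Fin n) (Fin n) ℝ) (p : Fin n → ℝ) : Prop :=
  Submodule.span ℝ (Set.range fun i : Fin n => (X ^ (i : ℕ)) *ᵥ p) = ⊤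

lemma sum_mulVec' {ι m k : Type*} [Fintype k] (s : Finset ι)
    (M : ι → Matrix m k ℝ) (v : k → ℝ) :
    (∑ i ∈ s, M i) *ᵥ v = ∑ i ∈ s, (M i) *ᵥ v := by
  ext j
  simp only [Matrix.mulVec, dotProduct, Finset.sum_apply, Matrix.sum_apply,
    Finset.sum_mul]
  rw [Finset.sum_comm]

lemma dotProduct_sum' {ι k : Type*} [Fintype k] (s : Finset ι)
    (q : k → ℝ) (v : ι → k → ℝ) :
    q ⬝ᵥ (∑ i ∈ s, v i) = ∑ i ∈ s, q ⬝ᵥ v i := by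
  simp only [dotProduct, Finset.sum_apply, Finset.mul_sum]
  rw [Finset.sum_comm]

lemma vecMulVec_mulVec' {k : Type*} [Fintype k] (p q u : k → ℝ) :
    (vecMulVec p q) *ᵥ u = (q ⬝ᵥ u) • p := by
  ext i
  simp only [Matrix.mulVec, Matrix.vecMulVec_apply, dotProduct, Pi.smul_apply,
    smul_eq_mul, Finset.sum_mul]
  exact Finset.sum_congr rfl fun j _ => by ring

/-- If `(X, p)` is controllable and `X + pqᵀ` shares no eigenvalue with `X`
(i.e. their characteristic polynomials are coprime), then `(Xᵀ + qpᵀ, q)` is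
controllable. -/
theorem controllable_of_no_shared_eigenvalue {n : ℕ}
    (X : Matrix (Fin n) (Fin n) ℝ) (p q : Fin n → ℝ)
    (hctrb : Controllable X p)
    (hcop : IsCoprime X.charpoly (X + vecMulVec p q).charpoly) :
    Controllable (Xᵀ + vecMulVec q p) q := by
  classical
  set A : Matrix (Fin n) (Fin n) ℝ := X + vecMulVec p q with hA
  have hT : Xᵀ + vecMulVec q p = Aᵀ := by
    ext i j
    simp [hA, vecMulVec, Matrix.transpose_apply, mul_comm]
  rw [Controllable, hT]
  by_contra hne
  obtain ⟨f, hf0, hfmap⟩ :=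
    Submodule.exists_dual_map_eq_bot_of_lt_top (lt_top_iff_ne_top.mpr hne) inferInstance
  set w : Fin n → ℝ := fun i => f (Pi.single i 1) with hw
  have hfw : ∀ v, f v = v ⬝ᵥ w := by
    intro v
    rw [LinearMap.pi_apply_eq_sum_univ f v]
    simp only [dotProduct, hw, smul_eq_mul]
    refine Finset.sum_congr rfl fun x _ => ?_
    have h1 : (fun j => if x = j then (1 : ℝ) else 0) = Pi.single x 1 := by
      funext j
      simp [Pi.single_apply, eq_comm]
    rw [h1]
  have hwne : w ≠ 0 := by
    intro h
    apply hf0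
    apply LinearMap.ext
    intro v
    rw [LinearMap.zero_apply, hfw, h]
    simp [dotProduct]
  -- From membership in the span, the dot products with `w` vanish for `i < n`.
  have hker : ∀ i : Fin n, q ⬝ᵥ ((A ^ (i : ℕ)) *ᵥ w) = 0 := by
    intro i
    have hmem : (Aᵀ ^ (i : ℕ)) *ᵥ q ∈
        Submodule.span ℝ (Set.range fun i : Fin n => (Aᵀ ^ (i : ℕ)) *ᵥ q) :=
      Submodule.subset_span ⟨i, rfl⟩
    have h0 : f ((Aᵀ ^ (i : ℕ)) *ᵥ q) = 0 := by
      have := Submodule.mem_map_of_mem (f := f) hmem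
      rw [hfmap] at this
      simpa using this
    rw [hfw] at h0
    rw [← Matrix.transpose_pow, Matrix.mulVec_transpose] at h0
    rwa [← dotProduct_mulVec] at h0
  -- Extend to all natural powers using Cayley–Hamilton for `A`.
  have hallk : ∀ k : ℕ, q ⬝ᵥ ((A ^ k) *ᵥ w) = 0 := by
    intro k
    have hmon : A.charpoly.Monic := Matrix.charpoly_monic A
    set r : Polynomial ℝ := (Polynomial.X ^ k) %ₘ A.charpoly with hr
    have hAk : A ^ k = Polynomial.aeval A r := by
      have h1 : (Polynomial.X : Polynomial ℝ) ^ k %ₘ A.charpoly +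
          A.charpoly * ((Polynomial.X ^ k) /ₘ A.charpoly) = Polynomial.X ^ k :=
        Polynomial.modByMonic_add_div _ _
      calc A ^ k = Polynomial.aeval A (Polynomial.X ^ k) :=
            (Polynomial.aeval_X_pow (x := A)).symm
        _ = Polynomial.aeval A
            (r + A.charpoly * ((Polynomial.X ^ k) /ₘ A.charpoly)) := by rw [hr, h1]
        _ = Polynomial.aeval A r := by
            rw [map_add, _root_.map_mul, Matrix.aeval_self_charpoly, zero_mul, add_zero]
    rw [hAk, Polynomial.aeval_eq_sum_range, sum_mulVec', dotProduct_sum']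
    apply Finset.sum_eq_zero
    intro j hj
    rcases eq_or_ne (r.coeff j) 0 with hc | hc
    · simp [hc]
    · have hrne : r ≠ 0 := by
        intro h0
        exact hc (by simp [h0])
      have hdeg : r.degree < A.charpoly.degree := Polynomial.degree_modByMonic_lt _ hmon
      have hdim : A.charpoly.degree = (n : ℕ) := by
        simpa using Matrix.charpoly_degree_eq_dim A
      have hjn : j < n := by
        have hj' : j ≤ r.natDegree := Polynomial.le_natDegree_of_ne_zero hc
        have : r.natDegree < n := by
          rw [Polynomial.natDegree_lt_iff_degree_lt hrne]
          rw [← hdim]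
          exact hdeg
        omega
      have := hker ⟨j, hjn⟩
      simp only [Fin.val_mk] at this
      rw [Matrix.smul_mulVec, dotProduct_smul, this, smul_zero]
  -- `A` and `X` act identically on the iterates of `w`.
  have hAX : ∀ k : ℕ, (A ^ k) *ᵥ w = (X ^ k) *ᵥ w := by
    intro k
    induction k with
    | zero => simp
    | succ k ih =>
      have hqu : q ⬝ᵥ ((A ^ k) *ᵥ w) = 0 := hallk k
      have hvmv : (vecMulVec p q) *ᵥ ((A ^ k) *ᵥ w) = 0 := by
        rw [vecMulVec_mulVec', hqu, zero_smul]
      rw [pow_succ', pow_succ', ← Matrix.mulVec_mulVec, ← Matrix.mulVec_mulVec, ih, hA]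
      rw [Matrix.add_mulVec, ← ih, hvmv, add_zero, ih]
  -- Polynomials in `A` and `X` act identically on `w`.
  have haeval : ∀ s : Polynomial ℝ,
      (Polynomial.aeval A s : Matrix (Fin n) (Fin n) ℝ) *ᵥ w =
      (Polynomial.aeval X s : Matrix (Fin n) (Fin n) ℝ) *ᵥ w := by
    intro s
    rw [Polynomial.aeval_eq_sum_range (x := A), Polynomial.aeval_eq_sum_range (x := X),
      sum_mulVec', sum_mulVec']
    refine Finset.sum_congr rfl fun j _ => ?_
    rw [Matrix.smul_mulVec, Matrix.smul_mulVec, hAX]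
  -- Use coprimality and Cayley–Hamilton to conclude `w = 0`.
  obtain ⟨a, b, hab⟩ := hcop
  have habA : Polynomial.aeval A a * Polynomial.aeval A X.charpoly = 1 := by
    have := congrArg (Polynomial.aeval A) hab
    rw [map_add, _root_.map_mul, _root_.map_mul, _root_.map_one,
      Matrix.aeval_self_charpoly, mul_zero, add_zero] at this
    exact this
  apply hwne
  calc w = (1 : Matrix (Fin n) (Fin n) ℝ) *ᵥ w := (Matrix.one_mulVec w).symm
    _ = (Polynomial.aeval A a * Polynomial.aeval A X.charpoly) *ᵥ w := by rw [habA]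
    _ = (Polynomial.aeval A a) *ᵥ ((Polynomial.aeval A X.charpoly) *ᵥ w) := by
        rw [Matrix.mulVec_mulVec]
    _ = (Polynomial.aeval A a) *ᵥ ((Polynomial.aeval X X.charpoly) *ᵥ w) := by
        rw [haeval]
    _ = 0 := by rw [Matrix.aeval_self_charpoly]; simp
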